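/- Let X_{1:K} be square matrices, Q ⪰ I, τ > 0, define Λ_{K+1} = Q and Λ_k = X_kᵀ Λ_{k+1} X_k + τ(Q + τ^{−1}Y_k) with Y_k ⪰ 0, let Φ_{j,k} := X_{j−1}⋯X_k, and let T_{k,j}(·) := Φ_{j,k}ᵀ(·)Φ_{j,k}. Then for any sequence of symmetric matrices Z_k,…,Z_K, ‖∑_{j=k}^{K} T_{k,j}(Z_j)‖_op ≤ (1/τ)·‖Λ_k‖_op · max_{j≥k} ‖Z_j‖_op. -/

import Mathlib

open Matrix

/-- The `ℓ₂ → ℓ₂` operator norm of a real matrix. -/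
noncomputable def opNorm {m n : ℕ} (M : Matrix (Fin m) (Fin n) ℝ) : ℝ :=
  ‖LinearMap.toContinuousLinearMap (Matrix.toEuclideanLin M)‖

lemma opNorm_nonneg {n : ℕ} (M : Matrix (Fin n) (Fin n) ℝ) : 0 ≤ opNorm M := norm_nonneg _

lemma formA {n : ℕ} (M : Matrix (Fin n) (Fin n) ℝ) (x : Fin n → ℝ) :
    x ⬝ᵥ (M *ᵥ x) ≤ opNorm M * (x ⬝ᵥ x) := by
  set e := WithLp.equiv 2 (Fin n → ℝ)
  set T := LinearMap.toContinuousLinearMap (toEuclideanLin M)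
  have h1 : x ⬝ᵥ (M *ᵥ x) = inner ℝ (e.symm x) (T (e.symm x)) := by
    show _ = inner ℝ (e.symm x) (LinearMap.toContinuousLinearMap (toEuclideanLin M) (e.symm x))
    rw [LinearMap.coe_toContinuousLinearMap', toEuclideanLin_apply,
      EuclideanSpace.inner_eq_star_dotProduct]
    simp [dotProduct, mul_comm]
    rfl
  have h2 : x ⬝ᵥ x = ‖e.symm x‖ ^ 2 := by
    rw [← real_inner_self_eq_norm_sq, EuclideanSpace.inner_eq_star_dotProduct]
    simp [dotProduct, e]
  rw [h1, h2]
  calc inner ℝ (e.symm x) (T (e.symm x)) ≤ ‖e.symm x‖ * ‖T (e.symm x)‖ := real_inner_le_norm _ _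
    _ ≤ ‖e.symm x‖ * (opNorm M * ‖e.symm x‖) := by
        exact mul_le_mul_of_nonneg_left (T.le_opNorm _) (norm_nonneg _)
    _ = opNorm M * ‖e.symm x‖ ^ 2 := by ring

lemma normB {n : ℕ} {S : Matrix (Fin n) (Fin n) ℝ} (hS : S.IsSymm) {c : ℝ} (hc : 0 ≤ c)
    (hbound : ∀ x : Fin n → ℝ, |x ⬝ᵥ (S *ᵥ x)| ≤ c * (x ⬝ᵥ x)) : opNorm S ≤ c := by
  have hsym : ∀ p q : Fin n → ℝ, p ⬝ᵥ (S *ᵥ q) = q ⬝ᵥ (S *ᵥ p) := by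
    intro p q
    rw [Matrix.dotProduct_mulVec, ← Matrix.mulVec_transpose, hS.eq, dotProduct_comm]
  have hpol : ∀ a b : Fin n → ℝ, a ⬝ᵥ (S *ᵥ b) ≤ (c/2) * (a ⬝ᵥ a + b ⬝ᵥ b) := by
    intro a b
    have E : (a+b) ⬝ᵥ (S *ᵥ (a+b)) = a ⬝ᵥ (S*ᵥa) + 2*(a ⬝ᵥ (S*ᵥb)) + b ⬝ᵥ (S*ᵥb) := by
      have := hsym b a
      simp only [mulVec_add, dotProduct_add, add_dotProduct]
      linarith
    have E' : (a-b) ⬝ᵥ (S *ᵥ (a-b)) = a ⬝ᵥ (S*ᵥa) - 2*(a ⬝ᵥ (S*ᵥb)) + b ⬝ᵥ (S*ᵥb) := by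
      have := hsym b a
      simp only [mulVec_sub, dotProduct_sub, sub_dotProduct]
      linarith
    have D : (a+b) ⬝ᵥ (a+b) = a ⬝ᵥ a + 2*(a ⬝ᵥ b) + b ⬝ᵥ b := by
      have := dotProduct_comm b a
      simp only [dotProduct_add, add_dotProduct]
      linarith
    have D' : (a-b) ⬝ᵥ (a-b) = a ⬝ᵥ a - 2*(a ⬝ᵥ b) + b ⬝ᵥ b := by
      have := dotProduct_comm b a
      simp only [dotProduct_sub, sub_dotProduct]
      linarith
    have h1 := (abs_le.mp (hbound (a+b))).2
    have h2 := (abs_le.mp (hbound (a-b))).1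
    rw [E, D] at h1
    rw [E', D'] at h2
    nlinarith [h1, h2]
  apply ContinuousLinearMap.opNorm_le_bound _ hc
  intro v
  set e := WithLp.equiv 2 (Fin n → ℝ) with he
  have hdot : ∀ w : Fin n → ℝ, w ⬝ᵥ w = ‖e.symm w‖ ^ 2 := by
    intro w
    rw [← real_inner_self_eq_norm_sq, EuclideanSpace.inner_eq_star_dotProduct]
    simp [dotProduct, e]
  set x : Fin n → ℝ := e v with hx
  have hvx : e.symm x = v := by simp [hx]
  set u : Fin n → ℝ := S *ᵥ x with hu
  have hTv : LinearMap.toContinuousLinearMap (toEuclideanLin S) v = e.symm u := by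
    rw [LinearMap.coe_toContinuousLinearMap', toEuclideanLin_apply]
    rfl
  rw [hTv]
  by_cases hu0 : ‖e.symm u‖ = 0
  · rw [hu0]; positivity
  have hβpos : 0 < ‖e.symm u‖ := lt_of_le_of_ne (norm_nonneg _) (Ne.symm hu0)
  by_cases hv0 : v = 0
  · exfalso
    apply hu0
    have hx0 : x = 0 := by rw [hx, hv0]; rfl
    have h4 : u = 0 := by rw [hu, hx0, mulVec_zero]
    rw [h4]
    have h5 : e.symm (0 : Fin n → ℝ) = 0 := rfl
    rw [h5, norm_zero]
  have hαpos : 0 < ‖v‖ := norm_pos_iff.mpr hv0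
  set α := ‖v‖
  set β := ‖e.symm u‖
  have key := hpol x ((α/β) • u)
  have hxx : x ⬝ᵥ x = α ^ 2 := by rw [hdot, hvx]
  have huu : u ⬝ᵥ u = β ^ 2 := hdot u
  have hSy : x ⬝ᵥ (S *ᵥ ((α/β) • u)) = (α/β) * (u ⬝ᵥ u) := by
    rw [mulVec_smul, dotProduct_smul, hsym x u, smul_eq_mul, hu]
  have hyy : ((α/β) • u) ⬝ᵥ ((α/β) • u) = (α/β)^2 * (u ⬝ᵥ u) := by
    rw [smul_dotProduct, dotProduct_smul, smul_eq_mul, smul_eq_mul]; ring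
  rw [hSy, hyy, huu, hxx] at key
  have hβne : β ≠ 0 := ne_of_gt hβpos
  have hmul : α * β ≤ c * α ^ 2 := by
    have h1 : (α/β) * β^2 = α * β := by field_simp
    have h2 : (α/β)^2 * β^2 = α^2 := by field_simp
    rw [h1, h2] at key
    linarith
  have h3 : α * β ≤ α * (c * α) := by nlinarith [hmul]
  exact le_of_mul_le_mul_left h3 hαpos

lemma dot_self_nonneg {n : ℕ} (x : Fin n → ℝ) : 0 ≤ x ⬝ᵥ x :=
  Finset.sum_nonneg fun i _ => mul_self_nonneg _

lemma psd_of_forms {n : ℕ} {M : Matrix (Fin n) (Fin n) ℝ} (h1 : M.IsSymm)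
    (h2 : ∀ x : Fin n → ℝ, 0 ≤ x ⬝ᵥ (M *ᵥ x)) : M.PosSemidef := by
  refine Matrix.PosSemidef.of_dotProduct_mulVec_nonneg ?_ ?_
  · rw [Matrix.IsHermitian, conjTranspose_eq_transpose_of_trivial]; exact h1
  · intro x; simpa using h2 x

lemma psd_forms {n : ℕ} {M : Matrix (Fin n) (Fin n) ℝ} (hM : M.PosSemidef)
    (x : Fin n → ℝ) : 0 ≤ x ⬝ᵥ (M *ᵥ x) := by simpa using hM.dotProduct_mulVec_nonneg x

lemma psd_symm {n : ℕ} {M : Matrix (Fin n) (Fin n) ℝ} (hM : M.PosSemidef) : M.IsSymm := by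
  have := hM.1
  rwa [Matrix.IsHermitian, conjTranspose_eq_transpose_of_trivial] at this

lemma psd_smul {n : ℕ} {M : Matrix (Fin n) (Fin n) ℝ} {c : ℝ} (hc : 0 ≤ c)
    (hM : M.PosSemidef) : (c • M).PosSemidef := by
  apply psd_of_forms
  · rw [Matrix.IsSymm, transpose_smul, (psd_symm hM).eq]
  · intro x
    rw [smul_mulVec, dotProduct_smul, smul_eq_mul]
    exact mul_nonneg hc (psd_forms hM x)

lemma psd_sum {n : ℕ} {s : Finset ℕ} {f : ℕ → Matrix (Fin n) (Fin n) ℝ}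
    (h : ∀ j ∈ s, (f j).PosSemidef) : (∑ j ∈ s, f j).PosSemidef :=
  Finset.sum_induction f _ (fun _ _ ha hb => ha.add hb) Matrix.PosSemidef.zero h

lemma psd_congr {n : ℕ} {A : Matrix (Fin n) (Fin n) ℝ} (hA : A.PosSemidef)
    (B : Matrix (Fin n) (Fin n) ℝ) : (Bᵀ * A * B).PosSemidef := by
  have := hA.conjTranspose_mul_mul_same B
  rwa [conjTranspose_eq_transpose_of_trivial] at this

section L2
open scoped Matrix.Norms.L2Operator

lemma opNorm_eq_l2 {n : ℕ} (M : Matrix (Fin n) (Fin n) ℝ) : opNorm M = ‖M‖ := rfl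

lemma opNorm_smul {n : ℕ} (c : ℝ) (M : Matrix (Fin n) (Fin n) ℝ) :
    opNorm (c • M) = |c| * opNorm M := by
  rw [opNorm_eq_l2, opNorm_eq_l2, norm_smul, Real.norm_eq_abs]

lemma opNorm_neg {n : ℕ} (M : Matrix (Fin n) (Fin n) ℝ) : opNorm (-M) = opNorm M := by
  rw [opNorm_eq_l2, opNorm_eq_l2, norm_neg]

end L2

lemma norm_le_of_sandwich {n : ℕ} {S B : Matrix (Fin n) (Fin n) ℝ} (hS : S.IsSymm)
    (hB1 : (B - S).PosSemidef) (hB2 : (B + S).PosSemidef) : opNorm S ≤ opNorm B := by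
  apply normB hS (opNorm_nonneg B)
  intro x
  have h1 := psd_forms hB1 x
  have h2 := psd_forms hB2 x
  rw [sub_mulVec, dotProduct_sub] at h1
  rw [add_mulVec, dotProduct_add] at h2
  have h3 := formA B x
  rw [abs_le]
  constructor <;> linarith

/-- Bound on sums of congruences by the Lyapunov solution: with `Λ_{K+1} = Q ⪰ I`,
`Λ_k = X_kᵀ Λ_{k+1} X_k + τ(Q + τ⁻¹ Y_k)`, `Y_k ⪰ 0`, `Φ_{j,k} = X_{j−1}⋯X_k`, and
`T_{k,j}(Z) = Φ_{j,k}ᵀ Z Φ_{j,k}`, for symmetric `Z_j`,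
`‖∑_{j=k}^K T_{k,j}(Z_j)‖_op ≤ τ⁻¹ ‖Λ_k‖_op max_{j ≥ k} ‖Z_j‖_op`. -/
theorem lyapunov_congruence_sum_bound {n K : ℕ}
    (τ : ℝ) (hτ : 0 < τ)
    (X Y Λ : ℕ → Matrix (Fin n) (Fin n) ℝ) (Q : Matrix (Fin n) (Fin n) ℝ)
    (Φ : ℕ → ℕ → Matrix (Fin n) (Fin n) ℝ)
    (hQ : (Q - 1).PosSemidef)
    (hY : ∀ k, 1 ≤ k → k ≤ K → (Y k).PosSemidef)
    (hΛtop : Λ (K + 1) = Q)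
    (hrec : ∀ k, 1 ≤ k → k ≤ K →
      Λ k = (X k)ᵀ * Λ (k + 1) * X k + τ • (Q + τ⁻¹ • Y k))
    (hΦdiag : ∀ k, Φ k k = 1)
    (hΦrec : ∀ j k, k ≤ j → Φ (j + 1) k = X j * Φ j k)
    (Z : ℕ → Matrix (Fin n) (Fin n) ℝ) (hZ : ∀ j, (Z j).IsSymm)
    (k : ℕ) (hk1 : 1 ≤ k) (hkK : k ≤ K) :
    opNorm (∑ j ∈ Finset.Icc k K, (Φ j k)ᵀ * Z j * Φ j k)
      ≤ (1 / τ) * opNorm (Λ k) *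
        (Finset.Icc k K).sup' (Finset.nonempty_Icc.mpr hkK) fun j => opNorm (Z j) := by
  have hτ' : τ ≠ 0 := ne_of_gt hτ
  -- the max of the norms
  set M : ℝ := (Finset.Icc k K).sup' (Finset.nonempty_Icc.mpr hkK) fun j => opNorm (Z j) with hMdef
  have hkmem : k ∈ Finset.Icc k K := Finset.mem_Icc.mpr ⟨le_refl k, hkK⟩
  have hMj : ∀ j ∈ Finset.Icc k K, opNorm (Z j) ≤ M := by
    intro j hj
    rw [hMdef]
    exact Finset.le_sup' (fun j => opNorm (Z j)) hj
  have hM0 : 0 ≤ M := le_trans (opNorm_nonneg (Z k)) (hMj k hkmem)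
  -- sandwich PSD facts for each Z j
  have hZup : ∀ j ∈ Finset.Icc k K, (M • (1 : Matrix (Fin n) (Fin n) ℝ) - Z j).PosSemidef := by
    intro j hj
    apply psd_of_forms
    · rw [Matrix.IsSymm, transpose_sub, transpose_smul, transpose_one, (hZ j).eq]
    · intro x
      have h1 := formA (Z j) x
      have h2 : x ⬝ᵥ x = x ⬝ᵥ ((1 : Matrix (Fin n) (Fin n) ℝ) *ᵥ x) := by rw [one_mulVec]
      have h3 : opNorm (Z j) * (x ⬝ᵥ x) ≤ M * (x ⬝ᵥ x) :=
        mul_le_mul_of_nonneg_right (hMj j hj) (dot_self_nonneg x)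
      rw [sub_mulVec, dotProduct_sub, smul_mulVec, dotProduct_smul, smul_eq_mul,
        ← h2]
      linarith
  have hZdown : ∀ j ∈ Finset.Icc k K, (M • (1 : Matrix (Fin n) (Fin n) ℝ) + Z j).PosSemidef := by
    intro j hj
    apply psd_of_forms
    · rw [Matrix.IsSymm, transpose_add, transpose_smul, transpose_one, (hZ j).eq]
    · intro x
      have h1 := formA (-(Z j)) x
      rw [opNorm_neg, neg_mulVec, dotProduct_neg] at h1
      have h3 : opNorm (Z j) * (x ⬝ᵥ x) ≤ M * (x ⬝ᵥ x) :=
        mul_le_mul_of_nonneg_right (hMj j hj) (dot_self_nonneg x)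
      rw [add_mulVec, dotProduct_add, smul_mulVec, dotProduct_smul, smul_eq_mul,
        one_mulVec]
      linarith
  -- transition matrices shift
  have hΦshift : ∀ c j : ℕ, c + 1 ≤ j → Φ j c = Φ j (c + 1) * X c := by
    intro c
    refine Nat.le_induction ?_ ?_
    · rw [hΦrec c c (le_refl c), hΦdiag c, hΦdiag (c+1), mul_one, one_mul]
    · intro j hj ih
      rw [hΦrec j c (by omega), ih, hΦrec j (c+1) hj, mul_assoc]
  -- the Gramian sums
  set A : ℕ → Matrix (Fin n) (Fin n) ℝ :=
    fun c => ∑ j ∈ Finset.Icc c K, (Φ j c)ᵀ * Φ j c with hAdef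
  have hA_apply : ∀ c, A c = ∑ j ∈ Finset.Icc c K, (Φ j c)ᵀ * Φ j c := fun _ => rfl
  have hApsd : ∀ c, (A c).PosSemidef := by
    intro c
    apply psd_sum
    intro j _
    have := posSemidef_conjTranspose_mul_self (Φ j c)
    rwa [conjTranspose_eq_transpose_of_trivial] at this
  -- Lyapunov domination, by downward induction
  have hLyap : ∀ m c, 1 ≤ c → c + m = K + 1 → (Λ c - τ • A c).PosSemidef := by
    intro m
    induction m with
    | zero =>
      intro c hc1 hc
      have hcK : c = K + 1 := by omega
      subst hcK
      have hempty : Finset.Icc (K+1) K = ∅ := Finset.Icc_eq_empty (by omega)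
      have hA0 : A (K+1) = 0 := by rw [hA_apply]; simp [hempty]
      rw [hA0, smul_zero, sub_zero, hΛtop]
      have := hQ.add (Matrix.PosSemidef.one (n := Fin n) (R := ℝ))
      simpa using this
    | succ m ih =>
      intro c hc1 hc
      have hcK : c ≤ K := by omega
      have hprev := ih (c+1) (by omega) (by omega)
      have hAc : A c = 1 + (X c)ᵀ * A (c+1) * X c := by
        rw [hA_apply, hA_apply]
        rw [← Finset.Ico_add_one_right_eq_Icc, Finset.sum_eq_sum_Ico_succ_bot (by omega), Finset.Ico_add_one_right_eq_Icc]
        congr 1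
        · rw [hΦdiag, transpose_one, one_mul]
        · have hterm' : ∀ j ∈ Finset.Icc (c+1) K,
              (Φ j c)ᵀ * Φ j c = (X c)ᵀ * ((Φ j (c+1))ᵀ * Φ j (c+1)) * X c := by
            intro j hj
            rw [hΦshift c j (Finset.mem_Icc.mp hj).1, transpose_mul,
              mul_assoc, mul_assoc, mul_assoc]
          rw [Finset.sum_congr rfl hterm', ← Finset.sum_mul, ← Finset.mul_sum]
      have hiden : Λ c - τ • A c
          = (X c)ᵀ * (Λ (c+1) - τ • A (c+1)) * X c + (τ • (Q - 1) + Y c) := by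
        rw [hrec c hc1 hcK, hAc]
        rw [Matrix.mul_sub, Matrix.sub_mul, Matrix.mul_smul, Matrix.smul_mul]
        rw [smul_add, smul_add, smul_smul, mul_inv_cancel₀ hτ', one_smul, smul_sub]
        abel
      rw [hiden]
      exact (psd_congr hprev (X c)).add ((psd_smul hτ.le hQ).add (hY c hc1 hcK))
  have hLk := hLyap (K + 1 - k) k hk1 (by omega)
  -- sandwiching the sum
  set S : Matrix (Fin n) (Fin n) ℝ := ∑ j ∈ Finset.Icc k K, (Φ j k)ᵀ * Z j * Φ j k with hSdef
  have hSsymm : S.IsSymm := by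
    rw [hSdef, Matrix.IsSymm, Matrix.transpose_sum]
    apply Finset.sum_congr rfl
    intro j _
    rw [transpose_mul, transpose_mul, transpose_transpose, (hZ j).eq, mul_assoc]
  have hterm : ∀ (W : Matrix (Fin n) (Fin n) ℝ) (j : ℕ),
      (Φ j k)ᵀ * (M • 1 + W) * Φ j k
        = M • ((Φ j k)ᵀ * Φ j k) + (Φ j k)ᵀ * W * Φ j k := by
    intro W j
    rw [Matrix.mul_add, Matrix.add_mul, Matrix.mul_smul, Matrix.smul_mul, Matrix.mul_one]
  have hsum_add : ∀ (W : ℕ → Matrix (Fin n) (Fin n) ℝ),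
      ∑ j ∈ Finset.Icc k K, (Φ j k)ᵀ * (M • 1 + W j) * Φ j k
        = M • A k + ∑ j ∈ Finset.Icc k K, (Φ j k)ᵀ * W j * Φ j k := by
    intro W
    rw [Finset.sum_congr rfl (fun j _ => hterm (W j) j), Finset.sum_add_distrib,
      ← Finset.smul_sum, ← hA_apply]
  have hMτ : (M / τ) • (τ • A k) = M • A k := by
    rw [smul_smul, div_mul_cancel₀ M hτ']
  -- upper sandwich
  have hB1 : ((M / τ) • Λ k - S).PosSemidef := by
    have hid : (M / τ) • Λ k - S
        = (M / τ) • (Λ k - τ • A k)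
          + ∑ j ∈ Finset.Icc k K, (Φ j k)ᵀ * (M • 1 + -(Z j)) * Φ j k := by
      rw [hsum_add (fun j => -(Z j))]
      rw [show ∑ j ∈ Finset.Icc k K, (Φ j k)ᵀ * -Z j * Φ j k = -S by
        rw [hSdef, ← Finset.sum_neg_distrib]
        apply Finset.sum_congr rfl
        intro j _
        rw [Matrix.mul_neg, Matrix.neg_mul]]
      rw [smul_sub, hMτ]
      abel
    rw [hid]
    refine (psd_smul (div_nonneg hM0 hτ.le) hLk).add (psd_sum ?_)
    intro j hj
    have := hZup j hj
    rw [show M • (1 : Matrix (Fin n) (Fin n) ℝ) + -(Z j) = M • 1 - Z j by abel]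
    exact psd_congr (hZup j hj) (Φ j k)
  have hB2 : ((M / τ) • Λ k + S).PosSemidef := by
    have hid : (M / τ) • Λ k + S
        = (M / τ) • (Λ k - τ • A k)
          + ∑ j ∈ Finset.Icc k K, (Φ j k)ᵀ * (M • 1 + Z j) * Φ j k := by
      rw [hsum_add Z, ← hSdef, smul_sub, hMτ]
      abel
    rw [hid]
    exact (psd_smul (div_nonneg hM0 hτ.le) hLk).add
      (psd_sum fun j hj => psd_congr (hZdown j hj) (Φ j k))
  -- conclude
  have hfinal := norm_le_of_sandwich hSsymm hB1 hB2
  rw [opNorm_smul, abs_of_nonneg (div_nonneg hM0 hτ.le)] at hfinal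
  calc opNorm S ≤ M / τ * opNorm (Λ k) := hfinal
    _ = 1 / τ * opNorm (Λ k) * M := by ring
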